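/- Let y⁰ be an improving feasible direction at a basic feasible solution x with basis B, let f ∈ N with y⁰_f > 0 and c̄_f < 0, and let z be the associated ray direction (z_B = -Ā_{·f}, z_f = 1, z zero elsewhere on N). Suppose Ā_{if} ≤ 0 for all degenerate basic indices i with y⁰_i = 0, and Ā_{gf} > 0 for some degenerate basic index g with y⁰_g > 0. Set α := min{ y⁰_i / Ā_{if} : i ∈ B, x_i = 0, y⁰_i > 0, Ā_{if} > 0 } > 0 and y¹ := y⁰ + αz. Then y¹ is again an improving feasible direction at x (Ay¹ = 0, cᵀy¹ < cᵀy⁰ < 0, and y¹_i ≥ 0 for all i with x_i = 0), and y¹_g = 0 for the index g attaining the minimum. -/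

import Mathlib

open Matrix Finset

/-- The `m × m` submatrix of `A` formed by the columns indexed by the basis `β`. -/
def subCols {m n : ℕ} (A : Matrix (Fin m) (Fin n) ℝ) (β : Fin m ↪ Fin n) :
    Matrix (Fin m) (Fin m) ℝ :=
  Matrix.of fun i k => A i (β k)

/-- The nonbasic index set `N = [n] \ B`. -/
def nonbasic {m n : ℕ} (β : Fin m ↪ Fin n) : Finset (Fin n) :=
  Finset.univ \ Finset.univ.image ⇑β

/-- The entry `Ā_{i f} = (A_B⁻¹ A)_{i f}` (column `f` of `A_B⁻¹ A`). -/
noncomputable def Abar {m n : ℕ} (A : Matrix (Fin m) (Fin n) ℝ) (β : Fin m ↪ Fin n)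
    (f : Fin n) (i : Fin m) : ℝ :=
  ((subCols A β)⁻¹.mulVec (fun r => A r f)) i

/-- The reduced cost `c̄_j = c_j - ((A_B⁻¹ A_N)ᵀ c_B)_j`. -/
noncomputable def redCost {m n : ℕ} (A : Matrix (Fin m) (Fin n) ℝ) (c : Fin n → ℝ)
    (β : Fin m ↪ Fin n) (j : Fin n) : ℝ :=
  c j - ∑ i, Abar A β j i * c (β i)

/-- Feasibility for the LP `min cᵀx, Ax = b, x ≥ 0`. -/
def IsFeasible {m n : ℕ} (A : Matrix (Fin m) (Fin n) ℝ) (b : Fin m → ℝ)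
    (x : Fin n → ℝ) : Prop :=
  A.mulVec x = b ∧ ∀ j, 0 ≤ x j

/-- `x` is the basic feasible solution associated with the basis `β`. -/
def IsBasicFeasible {m n : ℕ} (A : Matrix (Fin m) (Fin n) ℝ) (b : Fin m → ℝ)
    (x : Fin n → ℝ) (β : Fin m ↪ Fin n) : Prop :=
  IsUnit (subCols A β) ∧ IsFeasible A b x ∧ ∀ j ∈ nonbasic β, x j = 0

/-- `x` is a basic feasible solution (for some basis). -/
def IsBFS {m n : ℕ} (A : Matrix (Fin m) (Fin n) ℝ) (b : Fin m → ℝ)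
    (x : Fin n → ℝ) : Prop :=
  ∃ β : Fin m ↪ Fin n, IsBasicFeasible A b x β

/-- `β` is a feasible basis. -/
def IsFeasibleBasis {m n : ℕ} (A : Matrix (Fin m) (Fin n) ℝ) (b : Fin m → ℝ)
    (β : Fin m ↪ Fin n) : Prop :=
  IsUnit (subCols A β) ∧ ∃ x, IsFeasible A b x ∧ ∀ j ∈ nonbasic β, x j = 0

/-- Case III update `y¹ = y⁰ + αz` yields again an improving feasible
direction at `x`, with `y¹_g = 0` at the index attaining the minimum. -/
theorem stmt5 (m n : ℕ) (A : Matrix (Fin m) (Fin n) ℝ) (b : Fin m → ℝ) (c : Fin n → ℝ)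
    (β : Fin m ↪ Fin n) (x : Fin n → ℝ) (hx : IsBasicFeasible A b x β)
    (y0 : Fin n → ℝ) (hy0ker : A.mulVec y0 = 0)
    (hy0imp : ∑ j, c j * y0 j < 0)
    (hy0feas : ∀ i, x i = 0 → 0 ≤ y0 i)
    (f : Fin n) (hf : f ∈ nonbasic β) (hyf : 0 < y0 f) (hcf : redCost A c β f < 0)
    (z : Fin n → ℝ)
    (hzB : ∀ i, z (β i) = - Abar A β f i) (hzf : z f = 1)
    (hzN : ∀ j ∈ nonbasic β, j ≠ f → z j = 0)
    (hcase : ∀ i, x (β i) = 0 → y0 (β i) = 0 → Abar A β f i ≤ 0)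
    (g : Fin m) (hg1 : x (β g) = 0) (hg2 : 0 < y0 (β g)) (hg3 : 0 < Abar A β f g)
    (α : ℝ) (hα : α = y0 (β g) / Abar A β f g)
    (hαmin : ∀ i, x (β i) = 0 → 0 < y0 (β i) → 0 < Abar A β f i →
      α ≤ y0 (β i) / Abar A β f i)
    (y1 : Fin n → ℝ) (hy1 : y1 = y0 + α • z) :
    0 < α ∧ A.mulVec y1 = 0 ∧
      ∑ j, c j * y1 j < ∑ j, c j * y0 j ∧
      (∀ i, x i = 0 → 0 ≤ y1 i) ∧
      y1 (β g) = 0 := by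
  have hαpos : 0 < α := hα ▸ div_pos hg2 hg3
  -- key: sum against z
  have hsum : ∀ v : Fin n → ℝ, ∑ j, v j * z j = v f - ∑ i, Abar A β f i * v (β i) := by
    intro v
    have hsub : Finset.univ.image ⇑β ⊆ (Finset.univ : Finset (Fin n)) := Finset.subset_univ _
    have hsplit := Finset.sum_sdiff (f := fun j => v j * z j) hsub
    have h1 : ∑ j ∈ Finset.univ.image ⇑β, v j * z j = -∑ i, Abar A β f i * v (β i) := by
      rw [Finset.sum_image (fun a _ b _ h => β.injective h)]
      rw [← Finset.sum_neg_distrib]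
      refine Finset.sum_congr rfl fun i _ => ?_
      rw [hzB i]; ring
    have h2 : ∑ j ∈ Finset.univ \ Finset.univ.image ⇑β, v j * z j = v f := by
      rw [Finset.sum_eq_single f]
      · rw [hzf]; ring
      · intro j hj hjf; rw [hzN j hj hjf]; ring
      · intro hfn; exact absurd hf hfn
    rw [← hsplit]
    show (∑ j ∈ Finset.univ \ Finset.univ.image ⇑β, v j * z j)
        + ∑ j ∈ Finset.univ.image ⇑β, v j * z j = _
    rw [h1, h2]; ring
  have hS : IsUnit (subCols A β) := hx.1
  have hSdet : IsUnit (subCols A β).det := (Matrix.isUnit_iff_isUnit_det _).mp hS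
  -- A z = 0
  have hAz : A.mulVec z = 0 := by
    funext r
    have hrow : ∑ i, Abar A β f i * A r (β i) = A r f := by
      have : (subCols A β).mulVec (Abar A β f) = fun r => A r f := by
        show (subCols A β).mulVec ((subCols A β)⁻¹.mulVec _) = _
        rw [Matrix.mulVec_mulVec, Matrix.mul_nonsing_inv _ hSdet, Matrix.one_mulVec]
      have := congrFun this r
      rw [← this]
      simp [Matrix.mulVec, dotProduct, subCols, mul_comm]
    show ∑ j, A r j * z j = 0
    rw [hsum (fun j => A r j), hrow]; ring
  -- c z = redCost
  have hcz : ∑ j, c j * z j = redCost A c β f := hsum c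
  refine ⟨hαpos, ?_, ?_, ?_, ?_⟩
  · rw [hy1, Matrix.mulVec_add, hy0ker, Matrix.mulVec_smul, hAz]
    simp
  · have : ∑ j, c j * y1 j = ∑ j, c j * y0 j + α * redCost A c β f := by
      rw [hy1, ← hcz]
      simp only [Pi.add_apply, Pi.smul_apply, smul_eq_mul, mul_add,
        Finset.sum_add_distrib, Finset.mul_sum]
      congr 1
      exact Finset.sum_congr rfl fun j _ => by ring
    rw [this]
    nlinarith
  · intro i hi
    rw [hy1]
    simp only [Pi.add_apply, Pi.smul_apply, smul_eq_mul]
    by_cases hib : i ∈ Finset.univ.image ⇑β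
    · obtain ⟨k, -, rfl⟩ := Finset.mem_image.mp hib
      rw [hzB k]
      rcases le_or_gt (Abar A β f k) 0 with hk | hk
      · have := hy0feas _ hi
        nlinarith
      · have hy0k : 0 < y0 (β k) := by
          rcases (hy0feas _ hi).lt_or_eq with h | h
          · exact h
          · exact absurd (hcase k hi h.symm) (not_le.mpr hk)
        nlinarith [(le_div_iff₀ hk).mp (hαmin k hi hy0k hk)]
    · have hiN : i ∈ nonbasic β := Finset.mem_sdiff.mpr ⟨Finset.mem_univ i, hib⟩
      by_cases hif : i = f
      · subst hif; rw [hzf]; nlinarith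
      · rw [hzN i hiN hif]
        have := hy0feas i hi
        nlinarith
  · rw [hy1]
    simp only [Pi.add_apply, Pi.smul_apply, smul_eq_mul]
    rw [hzB g, hα]
    field_simp
    ring
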